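/- Let (v_1, …, v_n) be a perfect elimination order of a chordal graph G and let k < n be a positive integer. Then G is k-connected if and only if |N_{G_i}(v_i)| ≥ k for all 1 ≤ i ≤ n − k, where G_i = G[{v_i, v_{i+1}, …, v_n}]. -/

import Mathlib

/-- The identity ordering on `Fin n` is a perfect elimination order of `G`. -/
def IsPEO {n : ℕ} (G : SimpleGraph (Fin n)) : Prop :=
  ∀ i j k : Fin n, i < j → i < k → j ≠ k → G.Adj i j → G.Adj i k → G.Adj j k

lemma ncard_gt {n : ℕ} (i : Fin n) : {j : Fin n | i < j}.ncard = n - 1 - (i : ℕ) := by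
  have : {j : Fin n | i < j} = ↑(Finset.Ioi i) := by ext j; simp
  rw [this, Set.ncard_coe_finset, Fin.card_Ioi]

lemma exists_walk_ge {n : ℕ} {G : SimpleGraph (Fin n)} (hpeo : IsPEO G)
    (L : ℕ) {a b : Fin n} (W : G.Walk a b) (hL : W.length ≤ L) :
    ∃ W' : G.Walk a b, (∀ v ∈ W'.support, v ∈ W.support) ∧
      ∀ v ∈ W'.support, min a b ≤ v := by
  induction L generalizing W with
  | zero =>
    have h0 : W.length = 0 := Nat.le_zero.mp hL
    have hab : a = b := W.eq_of_length_eq_zero h0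
    subst hab
    refine ⟨W, fun v hv => hv, fun v hv => ?_⟩
    have h2 : W.support.length = 1 := by rw [SimpleGraph.Walk.length_support, h0]
    have h1 : W.support = a :: W.support.tail := W.support_eq_cons
    rw [h1] at hv h2
    simp only [List.length_cons] at h2
    have : W.support.tail = [] := List.eq_nil_of_length_eq_zero (by omega)
    rw [this] at hv
    simp only [List.mem_singleton] at hv
    simp [hv]
  | succ L ih =>
    set P := W.bypass with hPdef
    have hPpath : P.IsPath := W.bypass_isPath
    have hPsub : P.support ⊆ W.support := W.support_bypass_subset
    have hPlen : P.length ≤ W.length := W.length_bypass_le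
    by_cases hgood : ∀ v ∈ P.support, min a b ≤ v
    · exact ⟨P, fun v hv => hPsub hv, hgood⟩
    push_neg at hgood
    obtain ⟨v0, hv0, hv0'⟩ := hgood
    -- minimum vertex of the path
    have hFne : P.support.toFinset.Nonempty := ⟨a, by simp⟩
    set m := P.support.toFinset.min' hFne with hmdef
    have hmmem : m ∈ P.support := List.mem_toFinset.mp (P.support.toFinset.min'_mem hFne)
    have hmle : ∀ v ∈ P.support, m ≤ v := fun v hv =>
      P.support.toFinset.min'_le v (List.mem_toFinset.mpr hv)
    have hmlt : m < min a b := lt_of_le_of_lt (hmle v0 hv0) hv0'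
    have hma : m ≠ a := ne_of_lt (lt_of_lt_of_le hmlt (min_le_left a b))
    have hmb : m ≠ b := ne_of_lt (lt_of_lt_of_le hmlt (min_le_right a b))
    set T := P.takeUntil m hmmem with hTdef
    set D := P.dropUntil m hmmem with hDdef
    have hTD : T.append D = P := P.take_spec hmmem
    obtain ⟨w, hmw, D', hD'⟩ := D.exists_eq_cons_of_ne hmb
    obtain ⟨u, hmu, R', hR'⟩ := T.reverse.exists_eq_cons_of_ne hma
    -- membership facts
    have husupT : u ∈ T.support := by
      have : u ∈ T.reverse.support := by rw [hR']; simp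
      rwa [SimpleGraph.Walk.support_reverse, List.mem_reverse] at this
    have husup : u ∈ P.support := P.support_takeUntil_subset hmmem husupT
    have hwsupD' : w ∈ D'.support := D'.start_mem_support
    have hwsup : w ∈ P.support := by
      apply P.support_dropUntil_subset hmmem
      rw [← hDdef, hD']; simp
    have hmu' : m < u := lt_of_le_of_ne (hmle u husup) (G.ne_of_adj hmu)
    have hmw' : m < w := lt_of_le_of_ne (hmle w hwsup) (G.ne_of_adj hmw)
    -- u ≠ w from nodup of path support
    have hPsupp : P.support = T.support ++ D.support.tail := by
      rw [← hTD, SimpleGraph.Walk.support_append]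
    have hnd : P.support.Nodup := hPpath.support_nodup
    rw [hPsupp] at hnd
    have hdisj := (List.nodup_append'.mp hnd).2.2
    have huw : u ≠ w := by
      intro h
      exact hdisj husupT (by rw [hD']; simpa using (h ▸ hwsupD'))
    have hadj : G.Adj u w := hpeo m u w hmu' hmw' huw hmu hmw
    -- new shorter walk
    set W' : G.Walk a b := R'.reverse.append (SimpleGraph.Walk.cons hadj D') with hW'def
    have hlenT : T.length = R'.length + 1 := by
      have : T.reverse.length = R'.length + 1 := by rw [hR']; simp
      rwa [SimpleGraph.Walk.length_reverse] at this
    have hlenD : D.length = D'.length + 1 := by rw [hD']; simp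
    have hlenP : T.length + D.length = P.length := by
      rw [← hTD, SimpleGraph.Walk.length_append]
    have hW'len : W'.length ≤ L := by
      have : W'.length = R'.length + (D'.length + 1) := by
        rw [hW'def, SimpleGraph.Walk.length_append, SimpleGraph.Walk.length_reverse]
        simp
      have hWL : W.length ≤ L + 1 := hL
      omega
    have hW'sub : ∀ v ∈ W'.support, v ∈ P.support := by
      intro v hv
      rw [hW'def, SimpleGraph.Walk.support_append, List.mem_append] at hv
      rcases hv with hv | hv
      · rw [SimpleGraph.Walk.support_reverse, List.mem_reverse] at hv
        apply P.support_takeUntil_subset hmmem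
        have : v ∈ T.reverse.support := by rw [hR']; simp [hv]
        rwa [SimpleGraph.Walk.support_reverse, List.mem_reverse] at this
      · apply P.support_dropUntil_subset hmmem
        show v ∈ D.support
        rw [SimpleGraph.Walk.support_cons, List.tail_cons] at hv
        rw [hD', SimpleGraph.Walk.support_cons]
        exact List.mem_cons_of_mem m hv
    obtain ⟨W'', hsub, hge⟩ := ih W' hW'len
    exact ⟨W'', fun v hv => hPsub (hW'sub v (hsub v hv)), hge⟩

/-- Let the identity ordering on `Fin n` be a perfect elimination order of a
chordal graph `G` and let `0 < k < n`.  Then `G` is `k`-connected (removing any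
set of fewer than `k` vertices leaves a connected graph) if and only if each
vertex `v_i` with `i ≤ n − k` (in 1-indexed terms) has at least `k` neighbors of
larger index. -/
theorem k_connected_iff_later_degree_of_peo {n : ℕ} (G : SimpleGraph (Fin n))
    (hpeo : IsPEO G) (k : ℕ) (hk : 0 < k) (hkn : k < n) :
    (∀ S : Set (Fin n), S.ncard < k → (G.induce Sᶜ).Connected) ↔
      (∀ i : Fin n, (i : ℕ) + k < n →
        k ≤ {j : Fin n | i < j ∧ G.Adj i j}.ncard) := by
  constructor
  · intro hconn i hik
    by_contra hlt
    push_neg at hlt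
    set S := {j : Fin n | i < j ∧ G.Adj i j} with hSdef
    have hScon := hconn S hlt
    have hiS : i ∈ Sᶜ := by simp [hSdef]
    have hcard : {j : Fin n | i < j}.ncard = n - 1 - (i : ℕ) := ncard_gt i
    have hex : ∃ j : Fin n, i < j ∧ j ∉ S := by
      by_contra h
      push_neg at h
      have hsub : {j : Fin n | i < j} ⊆ S := fun j hj => h j hj
      have := Set.ncard_le_ncard hsub (Set.toFinite S)
      omega
    obtain ⟨j, hij, hjS⟩ := hex
    obtain ⟨p⟩ := hScon.preconnected ⟨i, hiS⟩ ⟨j, hjS⟩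
    have hW : ∃ W : G.Walk i j, ∀ v ∈ W.support, v ∉ S := by
      refine ⟨p.map (SimpleGraph.Embedding.induce Sᶜ).toHom, ?_⟩
      intro v hv
      have hv : v ∈ (p.map (SimpleGraph.Embedding.induce Sᶜ).toHom).support := hv
      rw [SimpleGraph.Walk.support_map] at hv
      obtain ⟨x, hx, rfl⟩ := List.mem_map.mp hv
      exact x.2
    obtain ⟨W, hWsup⟩ := hW
    obtain ⟨W', hsub, hge⟩ := exists_walk_ge hpeo W.length W le_rfl
    obtain ⟨w, hiw, W'', hW''⟩ := W'.exists_eq_cons_of_ne (ne_of_lt hij)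
    have hwsup : w ∈ W'.support := by rw [hW'']; simp
    have hgew : min i j ≤ w := hge w hwsup
    rw [min_eq_left hij.le] at hgew
    have hiw' : i < w := lt_of_le_of_ne hgew (G.ne_of_adj hiw)
    exact hWsup w (hsub w hwsup) ⟨hiw', hiw⟩
  · intro hdeg S hS
    have hi0lt : n - k - 1 < n := by omega
    set i0 : Fin n := ⟨n - k - 1, hi0lt⟩ with hi0def
    have hi0k : (i0 : ℕ) + k < n := by simp only [hi0def]; omega
    have hTcard : {j : Fin n | i0 < j}.ncard = k := by
      rw [ncard_gt]; simp only [hi0def]; omega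
    have hAT : {j : Fin n | i0 < j ∧ G.Adj i0 j} = {j : Fin n | i0 < j} := by
      apply Set.eq_of_subset_of_ncard_le (fun j hj => hj.1) _ (Set.toFinite _)
      rw [hTcard]; exact hdeg i0 hi0k
    have hclique : ∀ x y : Fin n, i0 < x → i0 < y → x ≠ y → G.Adj x y := by
      intro x y hx hy hxy
      have hax : G.Adj i0 x := ((Set.ext_iff.mp hAT x).mpr hx).2
      have hay : G.Adj i0 y := ((Set.ext_iff.mp hAT y).mpr hy).2
      exact hpeo i0 x y hx hy hxy hax hay
    have hex : ∃ t : Fin n, i0 < t ∧ t ∉ S := by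
      by_contra h
      push_neg at h
      have hsub : {j : Fin n | i0 < j} ⊆ S := fun j hj => h j hj
      have := Set.ncard_le_ncard hsub (Set.toFinite S)
      omega
    obtain ⟨t, hti0, htS⟩ := hex
    have htc : t ∈ Sᶜ := htS
    have hreach : ∀ d : ℕ, ∀ a : Fin n, ∀ ha : a ∈ Sᶜ, n - (a : ℕ) ≤ d →
        (G.induce Sᶜ).Reachable ⟨a, ha⟩ ⟨t, htc⟩ := by
      intro d
      induction d with
      | zero => intro a ha h0; exact absurd h0 (by have := a.isLt; omega)
      | succ d ih =>
        intro a ha hle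
        by_cases hat : a = t
        · subst hat; exact SimpleGraph.Reachable.refl _
        by_cases htop : i0 < a
        · have hadj : G.Adj a t := hclique a t htop hti0 hat
          exact SimpleGraph.Adj.reachable
            (show (G.induce Sᶜ).Adj ⟨a, ha⟩ ⟨t, htc⟩ from hadj)
        · have hale : (a : ℕ) ≤ n - k - 1 := by
            have : ¬ ((i0 : ℕ) < (a : ℕ)) := htop
            simp only [hi0def] at this; omega
          have hak : (a : ℕ) + k < n := by omega
          have hdeg' := hdeg a hak
          have hex2 : ∃ j : Fin n, (a < j ∧ G.Adj a j) ∧ j ∉ S := by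
            by_contra h
            push_neg at h
            have hsub : {j : Fin n | a < j ∧ G.Adj a j} ⊆ S :=
              fun j hj => h j hj
            have := Set.ncard_le_ncard hsub (Set.toFinite S)
            omega
          obtain ⟨j, ⟨haj, hadj⟩, hjS⟩ := hex2
          have haj' : (a : ℕ) < (j : ℕ) := haj
          have hjd : n - (j : ℕ) ≤ d := by have := j.isLt; omega
          exact (SimpleGraph.Adj.reachable
            (show (G.induce Sᶜ).Adj ⟨a, ha⟩ ⟨j, hjS⟩ from hadj)).trans (ih j hjS hjd)
    rw [SimpleGraph.connected_iff]
    refine ⟨?_, ⟨⟨t, htc⟩⟩⟩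
    rintro ⟨x, hx⟩ ⟨y, hy⟩
    exact (hreach n x hx (by omega)).trans ((hreach n y hy (by omega)).symm)
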